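/- (Existence and uniqueness for BSΔEs.) Consider the backward stochastic difference equation Y_{t+1} - Y_t = -f(ω, t+1, Y_{t+1}, Z_{t+1}) + Z_t M_{t+1} for t = 0,...,T-1 with terminal condition Y_T = η, where f is adapted and f(ω, T, y, z) does not depend on z. Assume f respects the equivalence ∼_M: if Z^1_t M_{t+1} = Z^2_t M_{t+1} for all t then f(ω,t,y,Z^1_t) = f(ω,t,y,Z^2_t). Then for any F_T-measurable η ∈ R^K there exists an adapted solution (Y, Z), with Y unique and Z unique up to the relation Z_t M_{t+1} = Z̃_t M_{t+1} for each t. Moreover Y_t = E[Y_{t+1} + f(ω,t+1,Y_{t+1},Z_{t+1}) | F_t]. -/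

import Mathlib

open Finset Matrix

section Setup

variable {Ω : Type*} [Fintype Ω] [DecidableEq Ω] {N : ℕ}

/-- A probability on a finite sample space with everywhere-positive weights. -/
structure FinProb (Ω : Type*) [Fintype Ω] where
  p : Ω → ℝ
  pos : ∀ ω, 0 < p ω
  sum_one : ∑ ω, p ω = 1

/-- `ω` and `ω'` share the same `W`-path up to time `t` (the atoms of `F_t`). -/
def samePath (W : ℕ → Ω → Fin N) (t : ℕ) (ω ω' : Ω) : Prop :=
  ∀ s ∈ Finset.range (t + 1), W s ω = W s ω'

instance (W : ℕ → Ω → Fin N) (t : ℕ) (ω ω' : Ω) : Decidable (samePath W t ω ω') := by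
  unfold samePath; infer_instance

/-- `F_t`-measurability: `f` is constant on the atoms of `F_t`. -/
def measF (W : ℕ → Ω → Fin N) (t : ℕ) {α : Type*} (f : Ω → α) : Prop :=
  ∀ ω ω', samePath W t ω ω' → f ω = f ω'

/-- Conditional expectation given `F_t`. -/
noncomputable def cexp (P : FinProb Ω) (W : ℕ → Ω → Fin N) (t : ℕ)
    {E : Type*} [AddCommGroup E] [Module ℝ E] (Y : Ω → E) (ω : Ω) : E :=
  (∑ ω' ∈ univ.filter (fun ω' => samePath W t ω ω'), P.p ω')⁻¹ •
    ∑ ω' ∈ univ.filter (fun ω' => samePath W t ω ω'), P.p ω' • Y ω'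

/-- The basis-vector valued process `W_t ∈ {e_1,…,e_N} ⊆ ℝ^N`. -/
def wvec (W : ℕ → Ω → Fin N) (t : ℕ) (ω : Ω) : Fin N → ℝ :=
  fun j => if W t ω = j then 1 else 0

/-- `M_{t+1} = W_{t+1} - E[W_{t+1} | F_t]` (indexed so that `Mdiff P W t` is `M_{t+1}`). -/
noncomputable def Mdiff (P : FinProb Ω) (W : ℕ → Ω → Fin N) (t : ℕ) (ω : Ω) : Fin N → ℝ :=
  wvec W (t + 1) ω - cexp P W t (wvec W (t + 1)) ω

/-- One-step conditional transition probability `P_t^k = e_k^* E[W_{t+1}|F_t]`. -/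
noncomputable def Pt (P : FinProb Ω) (W : ℕ → Ω → Fin N) (t : ℕ) (k : Fin N) (ω : Ω) : ℝ :=
  cexp P W t (fun ω' => wvec W (t + 1) ω' k) ω

/-- The `N × (N-1)` matrix `Ĩ` whose top block is the identity and last row is all `-1`. -/
def Itil (n : ℕ) : Matrix (Fin (n + 1)) (Fin n) ℝ :=
  fun i j => if (i : ℕ) = (j : ℕ) then 1 else if (i : ℕ) = n then -1 else 0

end Setup

set_option linter.unusedSectionVars false

section Lemmas
variable {Ω : Type*} [Fintype Ω] [DecidableEq Ω] {N : ℕ}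

lemma samePath_refl (W : ℕ → Ω → Fin N) (t : ℕ) (ω : Ω) : samePath W t ω ω := fun _ _ => rfl

lemma samePath_symm {W : ℕ → Ω → Fin N} {t : ℕ} {ω ω' : Ω} (h : samePath W t ω ω') :
    samePath W t ω' ω := fun s hs => (h s hs).symm

lemma samePath_trans {W : ℕ → Ω → Fin N} {t : ℕ} {ω₁ ω₂ ω₃ : Ω} (h : samePath W t ω₁ ω₂)
    (h' : samePath W t ω₂ ω₃) : samePath W t ω₁ ω₃ := fun s hs => (h s hs).trans (h' s hs)

lemma samePath_mono {W : ℕ → Ω → Fin N} {t t' : ℕ} (htt : t ≤ t') {ω ω' : Ω}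
    (h : samePath W t' ω ω') : samePath W t ω ω' := fun s hs =>
  h s (Finset.mem_range.2 (lt_of_lt_of_le (Finset.mem_range.1 hs) (by omega)))

lemma samePath_succ {W : ℕ → Ω → Fin N} {t : ℕ} {ω ω' : Ω} (h : samePath W t ω ω')
    (h2 : W (t + 1) ω = W (t + 1) ω') : samePath W (t + 1) ω ω' := by
  intro s hs
  by_cases hst : s = t + 1
  · subst hst; exact h2
  · exact h s (Finset.mem_range.2 (by have := Finset.mem_range.1 hs; omega))

lemma measF_mono {W : ℕ → Ω → Fin N} {t t' : ℕ} (htt : t ≤ t') {α : Type*} {g : Ω → α}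
    (h : measF W t g) : measF W t' g := fun ω ω' hp => h ω ω' (samePath_mono htt hp)

lemma atom_congr {W : ℕ → Ω → Fin N} {t : ℕ} {ω₁ ω₂ : Ω} (h : samePath W t ω₁ ω₂) :
    (univ.filter (fun ω' => samePath W t ω₁ ω')) = univ.filter (fun ω' => samePath W t ω₂ ω') := by
  apply Finset.filter_congr
  intro ω' _
  exact ⟨fun h' => samePath_trans (samePath_symm h) h', fun h' => samePath_trans h h'⟩

lemma denom_pos (P : FinProb Ω) (W : ℕ → Ω → Fin N) (t : ℕ) (ω : Ω) :
    0 < ∑ ω' ∈ univ.filter (fun ω' => samePath W t ω ω'), P.p ω' :=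
  Finset.sum_pos (fun i _ => P.pos i) ⟨ω, by simp [samePath_refl]⟩

lemma measF_cexp (P : FinProb Ω) (W : ℕ → Ω → Fin N) (t : ℕ) {E : Type*} [AddCommGroup E]
    [Module ℝ E] (Y : Ω → E) : measF W t (cexp P W t Y) := by
  intro ω ω' hp
  unfold cexp
  rw [atom_congr hp]

lemma cexp_of_measF (P : FinProb Ω) (W : ℕ → Ω → Fin N) (t : ℕ) {E : Type*} [AddCommGroup E]
    [Module ℝ E] {Y : Ω → E} (h : measF W t Y) (ω : Ω) : cexp P W t Y ω = Y ω := by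
  unfold cexp
  have hc : ∀ ω' ∈ univ.filter (fun ω' => samePath W t ω ω'), P.p ω' • Y ω' = P.p ω' • Y ω := by
    intro ω' hω'
    rw [← h ω ω' (by simpa using hω')]
  rw [Finset.sum_congr rfl hc, ← Finset.sum_smul, smul_smul,
    inv_mul_cancel₀ (denom_pos P W t ω).ne', one_smul]

lemma cexp_apply (P : FinProb Ω) (W : ℕ → Ω → Fin N) (t : ℕ) {K : ℕ} (Y : Ω → Fin K → ℝ)
    (ω : Ω) (k : Fin K) : cexp P W t Y ω k = cexp P W t (fun ω' => Y ω' k) ω := by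
  unfold cexp
  simp [Finset.sum_apply]

lemma cexp_add' (P : FinProb Ω) (W : ℕ → Ω → Fin N) (t : ℕ) {E : Type*} [AddCommGroup E]
    [Module ℝ E] (Y Z : Ω → E) (ω : Ω) :
    cexp P W t (fun ω' => Y ω' + Z ω') ω = cexp P W t Y ω + cexp P W t Z ω := by
  unfold cexp
  simp only [smul_add]
  rw [Finset.sum_add_distrib, smul_add]

lemma cexp_sub' (P : FinProb Ω) (W : ℕ → Ω → Fin N) (t : ℕ) {E : Type*} [AddCommGroup E]
    [Module ℝ E] (Y Z : Ω → E) (ω : Ω) :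
    cexp P W t (fun ω' => Y ω' - Z ω') ω = cexp P W t Y ω - cexp P W t Z ω := by
  unfold cexp
  simp only [smul_sub]
  rw [Finset.sum_sub_distrib, smul_sub]

lemma cexp_sum {ι : Type*} (s : Finset ι) (P : FinProb Ω) (W : ℕ → Ω → Fin N) (t : ℕ)
    (g : ι → Ω → ℝ) (ω : Ω) :
    cexp P W t (fun ω' => ∑ j ∈ s, g j ω') ω = ∑ j ∈ s, cexp P W t (g j) ω := by
  unfold cexp
  simp only [smul_eq_mul, Finset.mul_sum]
  rw [Finset.sum_comm]

lemma Mdiff_apply (P : FinProb Ω) (W : ℕ → Ω → Fin N) (t : ℕ) (ω : Ω) (j : Fin N) :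
    Mdiff P W t ω j = wvec W (t + 1) ω j - Pt P W t j ω := by
  unfold Mdiff Pt
  rw [Pi.sub_apply, cexp_apply]

lemma cexp_Mdiff (P : FinProb Ω) (W : ℕ → Ω → Fin N) (t : ℕ) (ω : Ω) :
    cexp P W t (Mdiff P W t) ω = 0 := by
  have h : cexp P W t (Mdiff P W t) ω =
      cexp P W t (fun ω' => wvec W (t+1) ω' - cexp P W t (wvec W (t+1)) ω') ω := rfl
  rw [h, cexp_sub', cexp_of_measF P W t (measF_cexp P W t _) ω, sub_self]

end Lemmas
section Rep
variable {Ω : Type*} [Fintype Ω] [DecidableEq Ω] {N : ℕ}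

lemma cexp_mul_wvec (P : FinProb Ω) (W : ℕ → Ω → Fin N) (t : ℕ) {D : Ω → ℝ}
    (hD : measF W (t + 1) D) (ω : Ω) :
    cexp P W t (fun ω' => D ω' * wvec W (t + 1) ω' (W (t + 1) ω)) ω
      = D ω * Pt P W t (W (t + 1) ω) ω := by
  unfold Pt cexp
  simp only [smul_eq_mul]
  have hc : ∀ ω' ∈ univ.filter (fun ω' => samePath W t ω ω'),
      P.p ω' * (D ω' * wvec W (t + 1) ω' (W (t + 1) ω))
        = D ω * (P.p ω' * wvec W (t + 1) ω' (W (t + 1) ω)) := by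
    intro ω' hω'
    by_cases h : W (t + 1) ω' = W (t + 1) ω
    · have hsp : samePath W (t + 1) ω ω' := samePath_succ (by simpa using hω') h.symm
      rw [hD ω ω' hsp]; ring
    · simp [wvec, h]
  rw [Finset.sum_congr rfl hc, ← Finset.mul_sum]
  ring

lemma cexp_mulVec (P : FinProb Ω) (W : ℕ → Ω → Fin N) (t : ℕ) {K : ℕ}
    {A : Ω → Matrix (Fin K) (Fin N) ℝ} (hA : measF W t A) (v : Ω → Fin N → ℝ) (ω : Ω) :
    cexp P W t (fun ω' => (A ω').mulVec (v ω')) ω = (A ω).mulVec (cexp P W t v ω) := by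
  unfold cexp
  have hc : ∀ ω' ∈ univ.filter (fun ω' => samePath W t ω ω'),
      P.p ω' • (A ω').mulVec (v ω') = P.p ω' • (A ω).mulVecLin (v ω') := by
    intro ω' hω'
    rw [← hA ω ω' (by simpa using hω'), Matrix.mulVecLin_apply]
  rw [Finset.sum_congr rfl hc, ← Matrix.mulVecLin_apply, _root_.map_smul, map_sum]
  simp only [_root_.map_smul]

/-- The martingale-representation `Z`. -/
noncomputable def zrep (P : FinProb Ω) (W : ℕ → Ω → Fin N) (t : ℕ) {K : ℕ}
    (G : Ω → Fin K → ℝ) (ω : Ω) : Matrix (Fin K) (Fin N) ℝ :=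
  fun k j => (Pt P W t j ω)⁻¹ *
    cexp P W t (fun ω' => (G ω' k - cexp P W t G ω' k) * wvec W (t + 1) ω' j) ω

lemma measF_zrep (P : FinProb Ω) (W : ℕ → Ω → Fin N) (t : ℕ) {K : ℕ} (G : Ω → Fin K → ℝ) :
    measF W t (zrep P W t G) := by
  intro ω ω' hp
  funext k j
  unfold zrep Pt
  rw [measF_cexp P W t _ ω ω' hp, measF_cexp P W t _ ω ω' hp]

lemma zrep_spec (P : FinProb Ω) (W : ℕ → Ω → Fin N) (t : ℕ) {K : ℕ}
    (hpos : ∀ k ω, 0 < Pt P W t k ω) {G : Ω → Fin K → ℝ} (hG : measF W (t + 1) G) (ω : Ω) :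
    (zrep P W t G ω).mulVec (Mdiff P W t ω) = G ω - cexp P W t G ω := by
  funext k
  set D : Ω → ℝ := fun ω' => G ω' k - cexp P W t G ω' k with hDdef
  have hD : measF W (t + 1) D := by
    intro ω₁ ω₂ hp
    have h1 : G ω₁ = G ω₂ := hG ω₁ ω₂ hp
    have h2 : cexp P W t G ω₁ = cexp P W t G ω₂ :=
      measF_cexp P W t G ω₁ ω₂ (samePath_mono (Nat.le_succ t) hp)
    simp [hDdef, h1, h2]
  have hmv : (zrep P W t G ω).mulVec (Mdiff P W t ω) k
      = ∑ j, zrep P W t G ω k j * Mdiff P W t ω j := by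
    simp [Matrix.mulVec, dotProduct]
  rw [hmv]
  have hsplit : ∀ j, zrep P W t G ω k j * Mdiff P W t ω j
      = zrep P W t G ω k j * wvec W (t + 1) ω j - zrep P W t G ω k j * Pt P W t j ω := by
    intro j; rw [Mdiff_apply]; ring
  rw [Finset.sum_congr rfl (fun j _ => hsplit j), Finset.sum_sub_distrib]
  have hS1 : ∑ j, zrep P W t G ω k j * wvec W (t + 1) ω j = D ω := by
    have : ∑ j, zrep P W t G ω k j * wvec W (t + 1) ω j = zrep P W t G ω k (W (t + 1) ω) := by
      simp [wvec, mul_ite]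
    rw [this]
    unfold zrep
    rw [cexp_mul_wvec P W t hD ω]
    field_simp [(hpos (W (t + 1) ω) ω).ne']
  have hS2 : ∑ j, zrep P W t G ω k j * Pt P W t j ω = 0 := by
    have he : ∀ j : Fin N, zrep P W t G ω k j * Pt P W t j ω
        = cexp P W t (fun ω' => D ω' * wvec W (t + 1) ω' j) ω := by
      intro j
      unfold zrep
      field_simp [(hpos j ω).ne']
      rfl
    rw [Finset.sum_congr rfl (fun j _ => he j), ← cexp_sum]
    have hfuneq : (fun ω' => ∑ j, D ω' * wvec W (t + 1) ω' j) = D := by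
      funext ω'
      rw [← Finset.mul_sum]
      simp [wvec]
    rw [hfuneq]
    have : cexp P W t D ω = cexp P W t (fun ω' => G ω' k) ω
        - cexp P W t (fun ω' => cexp P W t G ω' k) ω := cexp_sub' P W t _ _ ω
    have hm : measF W t (fun ω' => cexp P W t G ω' k) := by
      intro ω₁ ω₂ hp
      have := measF_cexp P W t G ω₁ ω₂ hp
      simp only [this]
    rw [this, cexp_of_measF P W t hm ω, ← cexp_apply, sub_self]
  rw [hS1, hS2, sub_zero]
  simp [hDdef, Pi.sub_apply]

end Rep
section Sol
variable {Ω : Type*} [Fintype Ω] [DecidableEq Ω] {n K : ℕ}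

/-- Backward-recursive construction of the solution; `sol P W f η T s` is the
pair `(Y, Z)` at time `T - s`. -/
noncomputable def sol (P : FinProb Ω) (W : ℕ → Ω → Fin (n + 1))
    (f : Ω → ℕ → (Fin K → ℝ) → Matrix (Fin K) (Fin (n + 1)) ℝ → (Fin K → ℝ))
    (η : Ω → Fin K → ℝ) (T : ℕ) :
    ℕ → (Ω → Fin K → ℝ) × (Ω → Matrix (Fin K) (Fin (n + 1)) ℝ)
  | 0 => (η, fun _ => 0)
  | s + 1 =>
    (cexp P W (T - (s + 1)) (fun ω => (sol P W f η T s).1 ω +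
        f ω (T - s) ((sol P W f η T s).1 ω) ((sol P W f η T s).2 ω)),
     zrep P W (T - (s + 1)) (fun ω => (sol P W f η T s).1 ω +
        f ω (T - s) ((sol P W f η T s).1 ω) ((sol P W f η T s).2 ω)))

lemma sol_succ (P : FinProb Ω) (W : ℕ → Ω → Fin (n + 1))
    (f : Ω → ℕ → (Fin K → ℝ) → Matrix (Fin K) (Fin (n + 1)) ℝ → (Fin K → ℝ))
    (η : Ω → Fin K → ℝ) (T s : ℕ) :
    sol P W f η T (s + 1) =
    (cexp P W (T - (s + 1)) (fun ω => (sol P W f η T s).1 ω +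
        f ω (T - s) ((sol P W f η T s).1 ω) ((sol P W f η T s).2 ω)),
     zrep P W (T - (s + 1)) (fun ω => (sol P W f η T s).1 ω +
        f ω (T - s) ((sol P W f η T s).1 ω) ((sol P W f η T s).2 ω))) := rfl

end Sol
set_option maxHeartbeats 1000000 in
/-- existence and uniqueness for the BSΔE. -/
theorem stmt7 {Ω : Type*} [Fintype Ω] [DecidableEq Ω] {n K : ℕ}
    (P : FinProb Ω) (W : ℕ → Ω → Fin (n + 1)) (T : ℕ) (hT : 1 ≤ T)
    (hpos : ∀ t < T, ∀ k ω, 0 < Pt P W t k ω)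
    (f : Ω → ℕ → (Fin K → ℝ) → Matrix (Fin K) (Fin (n + 1)) ℝ → (Fin K → ℝ))
    (hfad : ∀ t y z, measF W t (fun ω => f ω t y z))
    (hfT : ∀ ω y z z', f ω T y z = f ω T y z')
    (hfeq : ∀ t, 1 ≤ t → t ≤ T - 1 →
      ∀ Z1 Z2 : Ω → Matrix (Fin K) (Fin (n + 1)) ℝ,
        (∀ ω, (Z1 ω).mulVec (Mdiff P W t ω) = (Z2 ω).mulVec (Mdiff P W t ω)) →
        ∀ ω y, f ω t y (Z1 ω) = f ω t y (Z2 ω))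
    (η : Ω → Fin K → ℝ) (hη : measF W T η) :
    ∃ (Y : ℕ → Ω → Fin K → ℝ) (Z : ℕ → Ω → Matrix (Fin K) (Fin (n + 1)) ℝ),
      (∀ t ≤ T, measF W t (Y t)) ∧ (∀ t < T, measF W t (Z t)) ∧
      (∀ t < T, ∀ ω, Y (t + 1) ω - Y t ω =
          -(f ω (t + 1) (Y (t + 1) ω) (Z (t + 1) ω)) + (Z t ω).mulVec (Mdiff P W t ω)) ∧
      (∀ ω, Y T ω = η ω) ∧
      (∀ t < T, ∀ ω, Y t ω =
          cexp P W t (fun ω' => Y (t + 1) ω' + f ω' (t + 1) (Y (t + 1) ω') (Z (t + 1) ω')) ω) ∧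
      (∀ (Y' : ℕ → Ω → Fin K → ℝ) (Z' : ℕ → Ω → Matrix (Fin K) (Fin (n + 1)) ℝ),
        (∀ t ≤ T, measF W t (Y' t)) → (∀ t < T, measF W t (Z' t)) →
        (∀ t < T, ∀ ω, Y' (t + 1) ω - Y' t ω =
            -(f ω (t + 1) (Y' (t + 1) ω) (Z' (t + 1) ω)) + (Z' t ω).mulVec (Mdiff P W t ω)) →
        (∀ ω, Y' T ω = η ω) →
        (∀ t ≤ T, ∀ ω, Y' t ω = Y t ω) ∧
        (∀ t < T, ∀ ω, (Z' t ω).mulVec (Mdiff P W t ω) = (Z t ω).mulVec (Mdiff P W t ω))) := by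
  classical
  set Y : ℕ → Ω → Fin K → ℝ := fun t => (sol P W f η T (T - t)).1 with hYdef
  set Z : ℕ → Ω → Matrix (Fin K) (Fin (n + 1)) ℝ := fun t => (sol P W f η T (T - t)).2 with hZdef
  -- measurability of the constructed processes
  have hsolm : ∀ s, measF W (T - s) (sol P W f η T s).1 ∧ measF W (T - s) (sol P W f η T s).2 := by
    intro s
    cases s with
    | zero => exact ⟨hη, fun ω ω' _ => rfl⟩
    | succ s => exact ⟨measF_cexp P W (T - (s + 1)) _, measF_zrep P W (T - (s + 1)) _⟩
  have hYm : ∀ t ≤ T, measF W t (Y t) := by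
    intro t ht
    have h := (hsolm (T - t)).1
    rwa [show T - (T - t) = t by omega] at h
  have hZm : ∀ t ≤ T, measF W t (Z t) := by
    intro t ht
    have h := (hsolm (T - t)).2
    rwa [show T - (T - t) = t by omega] at h
  -- the structural recursion
  have hkey : ∀ t, t < T →
      Y t = cexp P W t (fun ω => Y (t + 1) ω + f ω (t + 1) (Y (t + 1) ω) (Z (t + 1) ω)) ∧
      Z t = zrep P W t (fun ω => Y (t + 1) ω + f ω (t + 1) (Y (t + 1) ω) (Z (t + 1) ω)) := by
    intro t ht
    have h1 : T - t = (T - (t + 1)) + 1 := by omega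
    have e1 : T - ((T - (t + 1)) + 1) = t := by omega
    have e2 : T - (T - (t + 1)) = t + 1 := by omega
    constructor
    · show (sol P W f η T (T - t)).1 = _
      rw [h1, sol_succ, e1, e2]
    · show (sol P W f η T (T - t)).2 = _
      rw [h1, sol_succ, e1, e2]
  -- terminal condition
  have hterm : ∀ ω, Y T ω = η ω := by
    intro ω
    show (sol P W f η T (T - T)).1 ω = η ω
    rw [Nat.sub_self]
    rfl
  -- measurability of the generator process
  have hGm : ∀ t, t < T →
      measF W (t + 1) (fun ω => Y (t + 1) ω + f ω (t + 1) (Y (t + 1) ω) (Z (t + 1) ω)) := by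
    intro t ht ω₁ ω₂ hp
    have hy := hYm (t + 1) (by omega) ω₁ ω₂ hp
    have hz := hZm (t + 1) (by omega) ω₁ ω₂ hp
    have hf : f ω₁ (t + 1) (Y (t + 1) ω₁) (Z (t + 1) ω₁)
        = f ω₂ (t + 1) (Y (t + 1) ω₁) (Z (t + 1) ω₁) :=
      hfad (t + 1) (Y (t + 1) ω₁) (Z (t + 1) ω₁) ω₁ ω₂ hp
    simp only [← hy, ← hz, hf]
  -- the martingale representation identity for the constructed Z
  have hZM : ∀ t, ∀ ht : t < T, ∀ ω, (Z t ω).mulVec (Mdiff P W t ω) =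
      (Y (t + 1) ω + f ω (t + 1) (Y (t + 1) ω) (Z (t + 1) ω)) - Y t ω := by
    intro t ht ω
    rw [(hkey t ht).2, zrep_spec P W t (hpos t ht) (hGm t ht) ω, ← (hkey t ht).1]
  refine ⟨Y, Z, hYm, fun t ht => hZm t (le_of_lt ht), ?_, hterm, ?_, ?_⟩
  · -- the difference equation
    intro t ht ω
    rw [hZM t ht ω]
    funext k
    simp only [Pi.sub_apply, Pi.add_apply, Pi.neg_apply]
    ring
  · -- the conditional-expectation formula
    intro t ht ω
    exact congrFun (hkey t ht).1 ω
  · -- uniqueness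
    intro Y' Z' hY'm hZ'm heq' hterm'
    have claim : ∀ s, s ≤ T →
        (∀ ω, Y' (T - s) ω = Y (T - s) ω) ∧
        (1 ≤ s → ∀ ω, (Z' (T - s) ω).mulVec (Mdiff P W (T - s) ω)
          = (Z (T - s) ω).mulVec (Mdiff P W (T - s) ω)) := by
      intro s
      induction s with
      | zero =>
        intro _
        refine ⟨fun ω => ?_, fun h => absurd h (by omega)⟩
        rw [Nat.sub_zero, hterm' ω, hterm ω]
      | succ s IH =>
        intro hsT
        have ht : T - (s + 1) < T := by omega
        set t := T - (s + 1) with htdef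
        have hts : T - s = t + 1 := by omega
        have IH' := IH (by omega)
        have hYind : ∀ ω, Y' (t + 1) ω = Y (t + 1) ω := by
          intro ω; have h := IH'.1 ω; rwa [hts] at h
        have hfind : ∀ ω, f ω (t + 1) (Y (t + 1) ω) (Z' (t + 1) ω)
            = f ω (t + 1) (Y (t + 1) ω) (Z (t + 1) ω) := by
          intro ω
          by_cases hTe : t + 1 = T
          · rw [hTe]; exact hfT ω _ _ _
          · have hZi : ∀ ω, (Z' (t + 1) ω).mulVec (Mdiff P W (t + 1) ω)
                = (Z (t + 1) ω).mulVec (Mdiff P W (t + 1) ω) := by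
              intro ω
              have h := IH'.2 (by omega) ω
              rwa [hts] at h
            exact hfeq (t + 1) (by omega) (by omega) (Z' (t + 1)) (Z (t + 1)) hZi ω _
        have hG'eq : ∀ ω, Y' (t + 1) ω + f ω (t + 1) (Y' (t + 1) ω) (Z' (t + 1) ω)
            = Y (t + 1) ω + f ω (t + 1) (Y (t + 1) ω) (Z (t + 1) ω) := by
          intro ω; rw [hYind, hfind]
        -- rearranged difference equation for the competitor solution
        have hrearr : ∀ ω, (Z' t ω).mulVec (Mdiff P W t ω)
            = (Y (t + 1) ω + f ω (t + 1) (Y (t + 1) ω) (Z (t + 1) ω)) - Y' t ω := by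
          intro ω
          have h := heq' t ht ω
          funext k
          have hk := congrFun h k
          have hg := congrFun (hG'eq ω) k
          simp only [Pi.sub_apply, Pi.add_apply, Pi.neg_apply] at hk hg ⊢
          linarith [hk, hg]
        have hY't : ∀ ω, Y' t ω
            = cexp P W t (fun ω => Y (t + 1) ω + f ω (t + 1) (Y (t + 1) ω) (Z (t + 1) ω)) ω := by
          intro ω
          have h0 : Y' t = fun ω' => (Y (t + 1) ω' + f ω' (t + 1) (Y (t + 1) ω') (Z (t + 1) ω'))
              - (Z' t ω').mulVec (Mdiff P W t ω') := by
            funext ω'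
            rw [hrearr ω']
            abel
          calc Y' t ω = cexp P W t (Y' t) ω :=
                (cexp_of_measF P W t (hY'm t (le_of_lt ht)) ω).symm
            _ = cexp P W t (fun ω' =>
                  (Y (t + 1) ω' + f ω' (t + 1) (Y (t + 1) ω') (Z (t + 1) ω'))
                  - (Z' t ω').mulVec (Mdiff P W t ω')) ω := by rw [← h0]
            _ = cexp P W t (fun ω' => Y (t + 1) ω' + f ω' (t + 1) (Y (t + 1) ω') (Z (t + 1) ω')) ω
                - cexp P W t (fun ω' => (Z' t ω').mulVec (Mdiff P W t ω')) ω :=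
                cexp_sub' P W t _ _ ω
            _ = _ := by
                rw [cexp_mulVec P W t (hZ'm t ht) (Mdiff P W t) ω, cexp_Mdiff,
                  Matrix.mulVec_zero, sub_zero]
        have hYfin : ∀ ω, Y' t ω = Y t ω := by
          intro ω
          rw [hY't ω, ← (hkey t ht).1]
        refine ⟨fun ω => hYfin ω, fun _ ω => ?_⟩
        rw [hrearr ω, hZM t ht ω, hYfin ω]
      -- end induction
    constructor
    · intro t htT ω
      have h := (claim (T - t) (by omega)).1 ω
      rwa [show T - (T - t) = t by omega] at h
    · intro t htT ω
      have h := (claim (T - t) (by omega)).2 (by omega) ω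
      rwa [show T - (T - t) = t by omega] at h
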